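/- Let g be the 4-dimensional real Lie algebra with basis {x₁, x₂, x₃, x₄} whose only nonzero brackets among basis elements are [x₁,x₂] = x₃ = −[x₂,x₁]. Then g admits no invariant scalar product (no nondegenerate symmetric bilinear form B with B([x,y],z) = B(x,[y,z]) for all x,y,z); however, the alternating bilinear form ω determined by ω(x₁,x₄) = ω(x₂,x₃) = 1 and ω(xᵢ,xⱼ) = 0 for all other pairs i < j is a symplectic structure on g, and the linear map D defined by D(x₁) = 2x₁, D(x₂) = −x₂, D(x₃) = x₃, D(x₄) = −2x₄ is a derivation of g that is skew-symmetric with respect to ω. -/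

import Mathlib

private lemma aux_repr {g : Type*} [AddCommGroup g] [Module ℝ g] (b : Module.Basis (Fin 4) ℝ g)
    (x : g) :
    x = b.repr x 0 • b 0 + b.repr x 1 • b 1 + b.repr x 2 • b 2 + b.repr x 3 • b 3 := by
  have h := b.sum_repr x
  rw [Fin.sum_univ_four] at h
  exact h.symm

private lemma aux_brk {g : Type*} [LieRing g] [LieAlgebra ℝ g] (b : Module.Basis (Fin 4) ℝ g)
    (h01 : ⁅b 0, b 1⁆ = b 2)
    (hrest : ∀ i j : Fin 4, ¬(i = 0 ∧ j = 1) → ¬(i = 1 ∧ j = 0) → ⁅b i, b j⁆ = 0)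
    (x y : g) :
    ⁅x, y⁆ = (b.repr x 0 * b.repr y 1 - b.repr x 1 * b.repr y 0) • b 2 := by
  have h10 : ⁅b 1, b 0⁆ = -b 2 := by rw [← lie_skew, h01]
  have key : ∀ a0 a1 a2 a3 c0 c1 c2 c3 : ℝ,
      ⁅a0 • b 0 + a1 • b 1 + a2 • b 2 + a3 • b 3,
        c0 • b 0 + c1 • b 1 + c2 • b 2 + c3 • b 3⁆ = (a0 * c1 - a1 * c0) • b 2 := by
    intro a0 a1 a2 a3 c0 c1 c2 c3
    simp only [lie_add, add_lie, lie_smul, smul_lie, h01, h10,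
      hrest 0 0 (by decide) (by decide), hrest 0 2 (by decide) (by decide),
      hrest 0 3 (by decide) (by decide), hrest 1 1 (by decide) (by decide),
      hrest 1 2 (by decide) (by decide), hrest 1 3 (by decide) (by decide),
      hrest 2 0 (by decide) (by decide), hrest 2 1 (by decide) (by decide),
      hrest 2 2 (by decide) (by decide), hrest 2 3 (by decide) (by decide),
      hrest 3 0 (by decide) (by decide), hrest 3 1 (by decide) (by decide),
      hrest 3 2 (by decide) (by decide), hrest 3 3 (by decide) (by decide),
      smul_zero, smul_neg, add_zero, zero_add]
    module
  conv_lhs => rw [aux_repr b x, aux_repr b y]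
  rw [key]

private lemma aux_omega {g : Type*} [AddCommGroup g] [Module ℝ g] (b : Module.Basis (Fin 4) ℝ g)
    (ω : LinearMap.BilinForm ℝ g) (halt : ∀ x : g, ω x x = 0)
    (h03 : ω (b 0) (b 3) = 1) (h12 : ω (b 1) (b 2) = 1)
    (h01 : ω (b 0) (b 1) = 0) (h02 : ω (b 0) (b 2) = 0)
    (h13 : ω (b 1) (b 3) = 0) (h23 : ω (b 2) (b 3) = 0)
    (x y : g) :
    ω x y = b.repr x 0 * b.repr y 3 + b.repr x 1 * b.repr y 2
      - b.repr x 2 * b.repr y 1 - b.repr x 3 * b.repr y 0 := by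
  have hskew : ∀ u v : g, ω v u = - ω u v := by
    intro u v
    have h := halt (u + v)
    simp only [map_add, LinearMap.add_apply, halt u, halt v] at h
    linarith
  have h30 : ω (b 3) (b 0) = -1 := by rw [hskew, h03]
  have h21 : ω (b 2) (b 1) = -1 := by rw [hskew, h12]
  have h10 : ω (b 1) (b 0) = 0 := by rw [hskew, h01, neg_zero]
  have h20 : ω (b 2) (b 0) = 0 := by rw [hskew, h02, neg_zero]
  have h31 : ω (b 3) (b 1) = 0 := by rw [hskew, h13, neg_zero]
  have h32 : ω (b 3) (b 2) = 0 := by rw [hskew, h23, neg_zero]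
  have key : ∀ a0 a1 a2 a3 c0 c1 c2 c3 : ℝ,
      ω (a0 • b 0 + a1 • b 1 + a2 • b 2 + a3 • b 3)
        (c0 • b 0 + c1 • b 1 + c2 • b 2 + c3 • b 3)
      = a0 * c3 + a1 * c2 - a2 * c1 - a3 * c0 := by
    intro a0 a1 a2 a3 c0 c1 c2 c3
    simp only [map_add, map_smul, LinearMap.add_apply, LinearMap.smul_apply, smul_eq_mul,
      h03, h12, h01, h02, h13, h23, h30, h21, h10, h20, h31, h32,
      halt (b 0), halt (b 1), halt (b 2), halt (b 3)]
    ring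
  conv_lhs => rw [aux_repr b x, aux_repr b y]
  rw [key]

/-- The 4-dimensional real Lie algebra with basis `x₁, x₂, x₃, x₄` and only nonzero bracket
`⁅x₁, x₂⁆ = x₃` admits no invariant scalar product; however the alternating form `ω` with
`ω x₁ x₄ = ω x₂ x₃ = 1` (and all other values on pairs of basis vectors zero) is a symplectic
structure, and the map `D` with `D x₁ = 2 x₁`, `D x₂ = -x₂`, `D x₃ = x₃`, `D x₄ = -2 x₄` is a
derivation which is skew-symmetric with respect to `ω`. -/
theorem stmt_4 (g : Type*) [LieRing g] [LieAlgebra ℝ g]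
    (b : Module.Basis (Fin 4) ℝ g)
    (h01 : ⁅b 0, b 1⁆ = b 2)
    (hrest : ∀ i j : Fin 4, ¬(i = 0 ∧ j = 1) → ¬(i = 1 ∧ j = 0) → ⁅b i, b j⁆ = 0) :
    (¬ ∃ B : LinearMap.BilinForm ℝ g, B.Nondegenerate ∧ (∀ x y : g, B x y = B y x) ∧
        ∀ x y z : g, B ⁅x, y⁆ z = B x ⁅y, z⁆) ∧
    (∀ ω : LinearMap.BilinForm ℝ g, (∀ x : g, ω x x = 0) →
      ω (b 0) (b 3) = 1 → ω (b 1) (b 2) = 1 →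
      ω (b 0) (b 1) = 0 → ω (b 0) (b 2) = 0 → ω (b 1) (b 3) = 0 → ω (b 2) (b 3) = 0 →
      (ω.Nondegenerate ∧
        ∀ x y z : g, ω ⁅x, y⁆ z + ω ⁅y, z⁆ x + ω ⁅z, x⁆ y = 0)) ∧
    (∀ D : g →ₗ[ℝ] g,
      D (b 0) = (2 : ℝ) • b 0 → D (b 1) = - b 1 → D (b 2) = b 2 → D (b 3) = (-2 : ℝ) • b 3 →
      ((∀ x y : g, D ⁅x, y⁆ = ⁅D x, y⁆ + ⁅x, D y⁆) ∧
        ∀ ω : LinearMap.BilinForm ℝ g, (∀ x : g, ω x x = 0) →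
          ω (b 0) (b 3) = 1 → ω (b 1) (b 2) = 1 →
          ω (b 0) (b 1) = 0 → ω (b 0) (b 2) = 0 → ω (b 1) (b 3) = 0 → ω (b 2) (b 3) = 0 →
          ∀ x y : g, ω (D x) y = - ω x (D y))) := by
  have h10 : ⁅b 1, b 0⁆ = -b 2 := by rw [← lie_skew, h01]
  refine ⟨?_, ?_, ?_⟩
  · rintro ⟨B, hnd, hsym, hinv⟩
    have hB0 : B (b 2) (b 0) = 0 := by
      have h := hinv (b 0) (b 1) (b 0)
      rw [h01, h10, map_neg, hsym (b 0) (b 2)] at h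
      linarith
    have hB1 : B (b 2) (b 1) = 0 := by
      have h := hinv (b 0) (b 1) (b 1)
      rw [h01, hrest 1 1 (by decide) (by decide), map_zero] at h
      exact h
    have hB2 : B (b 2) (b 2) = 0 := by
      have h := hinv (b 0) (b 1) (b 2)
      rw [h01, hrest 1 2 (by decide) (by decide), map_zero] at h
      exact h
    have hB3 : B (b 2) (b 3) = 0 := by
      have h := hinv (b 0) (b 1) (b 3)
      rw [h01, hrest 1 3 (by decide) (by decide), map_zero] at h
      exact h
    have hz : b 2 = 0 := by
      apply hnd.1
      intro y
      rw [aux_repr b y]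
      simp [hB0, hB1, hB2, hB3]
    exact b.ne_zero 2 hz
  · intro ω halt h03 h12 hω01 hω02 hω13 hω23
    have hω := aux_omega b ω halt h03 h12 hω01 hω02 hω13 hω23
    constructor
    · refine (LinearMap.IsRefl.nondegenerate_iff_separatingLeft
        (fun u v h => by rw [hω] at h ⊢; linarith)).mpr ?_
      intro x hx
      have e0 : b.repr x 0 = 0 := by
        have h := hx (b 3); rw [hω] at h
        simpa [Module.Basis.repr_self, Finsupp.single_apply] using h
      have e1 : b.repr x 1 = 0 := by
        have h := hx (b 2); rw [hω] at h
        simpa [Module.Basis.repr_self, Finsupp.single_apply] using h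
      have e2 : b.repr x 2 = 0 := by
        have h := hx (b 1); rw [hω] at h
        simpa [Module.Basis.repr_self, Finsupp.single_apply] using h
      have e3 : b.repr x 3 = 0 := by
        have h := hx (b 0); rw [hω] at h
        simpa [Module.Basis.repr_self, Finsupp.single_apply] using h
      rw [aux_repr b x, e0, e1, e2, e3]
      simp
    · intro x y z
      have hb2 : ∀ w : g, ω (b 2) w = - b.repr w 1 := by
        intro w
        rw [hω]
        simp [Module.Basis.repr_self, Finsupp.single_apply]
      rw [aux_brk b h01 hrest x y, aux_brk b h01 hrest y z, aux_brk b h01 hrest z x]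
      simp only [map_smul, LinearMap.smul_apply, smul_eq_mul, hb2]
      ring
  · intro D hD0 hD1 hD2 hD3
    have hDx : ∀ x : g, D x = (2 * b.repr x 0) • b 0 + (- b.repr x 1) • b 1
        + (b.repr x 2) • b 2 + (-2 * b.repr x 3) • b 3 := by
      intro x
      conv_lhs => rw [aux_repr b x]
      rw [map_add, map_add, map_add, map_smul, map_smul, map_smul, map_smul,
        hD0, hD1, hD2, hD3]
      module
    have hre : ∀ (x : g) (i : Fin 4),
        b.repr (D x) i = (Finsupp.single (0 : Fin 4) (2 * b.repr x 0)
          + Finsupp.single (1 : Fin 4) (- b.repr x 1)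
          + Finsupp.single (2 : Fin 4) (b.repr x 2)
          + Finsupp.single (3 : Fin 4) (-2 * b.repr x 3)) i := by
      intro x i
      rw [hDx x]
      simp [Module.Basis.repr_self, Finsupp.smul_single]
    have e0 : ∀ x : g, b.repr (D x) 0 = 2 * b.repr x 0 := by
      intro x; rw [hre]; simp [Finsupp.single_apply]
    have e1 : ∀ x : g, b.repr (D x) 1 = - b.repr x 1 := by
      intro x; rw [hre]; simp [Finsupp.single_apply]
    have e2 : ∀ x : g, b.repr (D x) 2 = b.repr x 2 := by
      intro x; rw [hre]; simp [Finsupp.single_apply]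
    have e3 : ∀ x : g, b.repr (D x) 3 = -2 * b.repr x 3 := by
      intro x; rw [hre]; simp [Finsupp.single_apply]
    constructor
    · intro x y
      rw [aux_brk b h01 hrest x y, aux_brk b h01 hrest (D x) y, aux_brk b h01 hrest x (D y),
        map_smul, hD2, e0, e1, e0, e1]
      module
    · intro ω halt h03 h12 hω01 hω02 hω13 hω23 x y
      have hω := aux_omega b ω halt h03 h12 hω01 hω02 hω13 hω23
      rw [hω (D x) y, hω x (D y), e0, e1, e2, e3, e0, e1, e2, e3]
      ring
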